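/- Let (v_g)_{g∈Γ}, (w_g)_{g∈Γ} ∈ ℓ²(Γ) with Σ_g |v_g|² ≤ 1 and Σ_g |w_g|² ≤ 1, let h = sup_g |v_g|, let F ⊂ Γ be a finite set, let C ≥ 0, ε > 0, and let c: Γ × Γ → ℂ be a function with |c(g, g')| ≤ C for all g, g' and |c(g, g')| < ε whenever g' ∉ gF. Then |Σ_{g, g' ∈ Γ} v_g w_{g⁻¹} \overline{v_{g'} w_{g'⁻¹}} c(g, g')| ≤ C · h · |F| + ε. -/

import Mathlib

open Filter

/-- The abstract Cauchy–Schwarz estimate behind the height lemma: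
if `v, w ∈ ℓ²(Γ)` with norms at most `1`, `h = sup_g |v_g|`, `F ⊆ Γ` is
finite, `|c(g,g')| ≤ C` everywhere and `|c(g,g')| < ε` off `{(g,g') : g' ∈ gF}`,
then `|Σ_{g,g'} v_g w_{g⁻¹} conj(v_{g'} w_{g'⁻¹}) c(g,g')| ≤ C·h·|F| + ε`. -/
theorem height_cauchy_schwarz_estimate
    {Γ : Type*} [Group Γ] [Countable Γ]
    (v w : Γ → ℂ)
    (hv_sum : Summable (fun g => ‖v g‖ ^ 2)) (hv : ∑' g, ‖v g‖ ^ 2 ≤ 1)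
    (hw_sum : Summable (fun g => ‖w g‖ ^ 2)) (hw : ∑' g, ‖w g‖ ^ 2 ≤ 1)
    (h : ℝ) (hh : h = ⨆ g, ‖v g‖)
    (F : Finset Γ) (C ε : ℝ) (hC : 0 ≤ C) (hε : 0 < ε)
    (c : Γ × Γ → ℂ)
    (hc_bdd : ∀ g g' : Γ, ‖c (g, g')‖ ≤ C)
    (hc_small : ∀ g g' : Γ, (∀ f ∈ F, g' ≠ g * f) → ‖c (g, g')‖ < ε) :
    ‖∑' p : Γ × Γ,
        v p.1 * w p.1⁻¹ * (starRingEnd ℂ) (v p.2 * w p.2⁻¹) * c p‖ ≤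
      C * h * F.card + ε := by
  classical
  set a : Γ → ℝ := fun g => ‖v g‖ * ‖w g⁻¹‖ with ha_def
  have ha_nonneg : ∀ g, 0 ≤ a g := fun g => mul_nonneg (norm_nonneg _) (norm_nonneg _)
  -- summability of ‖w (·)⁻¹‖^2
  have hw_sum' : Summable (fun g => ‖w g⁻¹‖ ^ 2) := by
    have := (Equiv.inv Γ).summable_iff.mpr hw_sum
    exact this
  have hw' : ∑' g, ‖w g⁻¹‖ ^ 2 ≤ 1 := by
    have heq : ∑' g, ‖w g⁻¹‖ ^ 2 = ∑' g, ‖w g‖ ^ 2 := by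
      simpa only [Equiv.inv_apply] using (Equiv.inv Γ).tsum_eq (fun g => ‖w g‖ ^ 2)
    rw [heq]; exact hw
  -- a is summable
  have ha_sum : Summable a := by
    apply Summable.of_nonneg_of_le ha_nonneg (fun g => ?_) (hv_sum.add hw_sum')
    have := two_mul_le_add_sq (‖v g‖) (‖w g⁻¹‖)
    have h0 : 0 ≤ a g := ha_nonneg g
    simp only [ha_def]
    nlinarith [norm_nonneg (v g), norm_nonneg (w g⁻¹)]
  -- Cauchy–Schwarz: ∑ a ≤ 1
  have hS : ∑' g, a g ≤ 1 := by
    apply Summable.tsum_le_of_sum_le ha_sum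
    intro s
    have hcs := Finset.sum_mul_sq_le_sq_mul_sq s (fun g => ‖v g‖) (fun g => ‖w g⁻¹‖)
    have h1 : ∑ g ∈ s, ‖v g‖ ^ 2 ≤ 1 :=
      le_trans (Summable.sum_le_tsum s (fun g _ => sq_nonneg _) hv_sum) hv
    have h2 : ∑ g ∈ s, ‖w g⁻¹‖ ^ 2 ≤ 1 :=
      le_trans (Summable.sum_le_tsum s (fun g _ => sq_nonneg _) hw_sum') hw'
    have h3 : 0 ≤ ∑ g ∈ s, a g := Finset.sum_nonneg fun g _ => ha_nonneg g
    have h4 : (0:ℝ) ≤ ∑ g ∈ s, ‖v g‖ ^ 2 := Finset.sum_nonneg fun g _ => sq_nonneg _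
    nlinarith
  have hS0 : 0 ≤ ∑' g, a g := tsum_nonneg ha_nonneg
  -- pointwise bounds on v and w
  have hv1 : ∀ g, ‖v g‖ ≤ 1 := by
    intro g
    have := Summable.le_tsum hv_sum g (fun j _ => sq_nonneg _)
    nlinarith [norm_nonneg (v g)]
  have hw1 : ∀ g, ‖w g‖ ≤ 1 := by
    intro g
    have := Summable.le_tsum hw_sum g (fun j _ => sq_nonneg _)
    nlinarith [norm_nonneg (w g)]
  have hvh : ∀ g, ‖v g‖ ≤ h := by
    intro g
    rw [hh]
    have hbdd : BddAbove (Set.range fun g : Γ => ‖v g‖) := by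
      refine ⟨1, ?_⟩
      rintro x ⟨g, rfl⟩
      exact hv1 g
    exact le_ciSup hbdd g
  have hh0 : 0 ≤ h := le_trans (norm_nonneg (v 1)) (hvh 1)
  have hah : ∀ g, a g ≤ h := fun g => by
    have := mul_le_mul (hvh g) (hw1 g⁻¹) (norm_nonneg _) hh0
    simpa [ha_def] using this
  -- the product sequence a p.1 * a p.2
  have haa_sum : Summable (fun p : Γ × Γ => a p.1 * a p.2) :=
    ha_sum.mul_of_nonneg ha_sum ha_nonneg ha_nonneg
  -- the two bounding sequences
  set b₁ : Γ × Γ → ℝ :=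
    fun p => C * ∑ f ∈ F, (if p.2 = p.1 * f then a p.1 * a p.2 else 0) with hb₁def
  set b₂ : Γ × Γ → ℝ := fun p => ε * (a p.1 * a p.2) with hb₂def
  have hterm_sum : ∀ f : Γ,
      Summable (fun p : Γ × Γ => if p.2 = p.1 * f then a p.1 * a p.2 else 0) := by
    intro f
    apply Summable.of_nonneg_of_le (fun p => ?_) (fun p => ?_) haa_sum
    · split
      · exact mul_nonneg (ha_nonneg _) (ha_nonneg _)
      · exact le_rfl
    · split
      · exact le_rfl
      · exact mul_nonneg (ha_nonneg _) (ha_nonneg _)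
  have hb₁_sum : Summable b₁ := by
    apply Summable.mul_left
    exact summable_sum (fun f _ => hterm_sum f)
  have hb₂_sum : Summable b₂ := haa_sum.mul_left ε
  have hb₁_nonneg : ∀ p, 0 ≤ b₁ p := by
    intro p
    apply mul_nonneg hC
    apply Finset.sum_nonneg
    intro f _
    split
    · exact mul_nonneg (ha_nonneg _) (ha_nonneg _)
    · exact le_rfl
  have hb₂_nonneg : ∀ p, 0 ≤ b₂ p :=
    fun p => mul_nonneg hε.le (mul_nonneg (ha_nonneg _) (ha_nonneg _))
  -- pointwise bound on the norm of the summand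
  set f : Γ × Γ → ℂ :=
    fun p => v p.1 * w p.1⁻¹ * (starRingEnd ℂ) (v p.2 * w p.2⁻¹) * c p with hfdef
  have hnorm : ∀ p : Γ × Γ, ‖f p‖ = a p.1 * a p.2 * ‖c p‖ := by
    intro p
    simp only [hfdef, ha_def, norm_mul, map_mul, Complex.norm_conj,
      map_inv₀, RingHom.coe_comp]
  have hbound : ∀ p : Γ × Γ, ‖f p‖ ≤ b₁ p + b₂ p := by
    intro p
    rw [hnorm p]
    by_cases hp : ∃ f₀ ∈ F, p.2 = p.1 * f₀
    · obtain ⟨f₀, hf₀F, hf₀⟩ := hp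
      have h1 : a p.1 * a p.2 * C ≤ b₁ p := by
        rw [hb₁def]
        have hle : a p.1 * a p.2 ≤
            ∑ f ∈ F, (if p.2 = p.1 * f then a p.1 * a p.2 else 0) := by
          have hnn : ∀ i ∈ F, 0 ≤ (if p.2 = p.1 * i then a p.1 * a p.2 else 0) := by
            intro i _
            split
            · exact mul_nonneg (ha_nonneg _) (ha_nonneg _)
            · exact le_rfl
          have := Finset.single_le_sum hnn hf₀F
          simpa [hf₀] using this
        calc a p.1 * a p.2 * C = C * (a p.1 * a p.2) := by ring
          _ ≤ C * ∑ f ∈ F, (if p.2 = p.1 * f then a p.1 * a p.2 else 0) :=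
            mul_le_mul_of_nonneg_left hle hC
      have h2 : a p.1 * a p.2 * ‖c p‖ ≤ a p.1 * a p.2 * C :=
        mul_le_mul_of_nonneg_left (by simpa using hc_bdd p.1 p.2)
          (mul_nonneg (ha_nonneg _) (ha_nonneg _))
      linarith [hb₂_nonneg p]
    · push_neg at hp
      have hsmall : ‖c p‖ ≤ ε := (hc_small p.1 p.2 hp).le
      have h2 : a p.1 * a p.2 * ‖c p‖ ≤ b₂ p := by
        rw [hb₂def]
        calc a p.1 * a p.2 * ‖c p‖ ≤ a p.1 * a p.2 * ε :=
              mul_le_mul_of_nonneg_left hsmall (mul_nonneg (ha_nonneg _) (ha_nonneg _))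
          _ = ε * (a p.1 * a p.2) := by ring
      linarith [hb₁_nonneg p]
  have hnorm_sum : Summable (fun p => ‖f p‖) :=
    Summable.of_nonneg_of_le (fun p => norm_nonneg _) hbound (hb₁_sum.add hb₂_sum)
  -- bound the double sums
  have htsum_b₂ : ∑' p, b₂ p ≤ ε := by
    rw [hb₂def, tsum_mul_left, Summable.tsum_prod' haa_sum (fun g => (ha_sum.mul_left (a g)))]
    have : ∑' (g : Γ) (g' : Γ), a g * a g' = (∑' g, a g) * (∑' g, a g) := by
      simp_rw [tsum_mul_left]
      rw [tsum_mul_right]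
    rw [this]
    exact mul_le_of_le_one_right hε.le (mul_le_one₀ hS hS0 hS)
  have htsum_b₁ : ∑' p, b₁ p ≤ C * h * F.card := by
    rw [hb₁def]
    rw [tsum_mul_left]
    have hswap : ∑' p : Γ × Γ, ∑ f ∈ F, (if p.2 = p.1 * f then a p.1 * a p.2 else 0)
        = ∑ f ∈ F, ∑' p : Γ × Γ, (if p.2 = p.1 * f then a p.1 * a p.2 else 0) :=
      Summable.tsum_finsetSum (fun f _ => hterm_sum f)
    rw [hswap]
    have hterm_le : ∀ f₀ ∈ F,
        ∑' p : Γ × Γ, (if p.2 = p.1 * f₀ then a p.1 * a p.2 else 0) ≤ h := by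
      intro f₀ _
      rw [Summable.tsum_prod' (hterm_sum f₀) (fun g => by
        apply Summable.of_nonneg_of_le (fun g' => ?_) (fun g' => ?_)
          (ha_sum.mul_left (a g))
        · split
          · exact mul_nonneg (ha_nonneg _) (ha_nonneg _)
          · exact le_rfl
        · split
          · exact le_rfl
          · exact mul_nonneg (ha_nonneg _) (ha_nonneg _))]
      have hinner : ∀ g : Γ,
          ∑' g' : Γ, (if g' = g * f₀ then a g * a g' else 0) = a g * a (g * f₀) := by
        intro g
        rw [tsum_eq_single (g * f₀) (fun g' hne => by simp [hne])]
        simp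
      simp_rw [hinner]
      calc ∑' g, a g * a (g * f₀) ≤ ∑' g, a g * h := by
            apply Summable.tsum_le_tsum (fun g =>
              mul_le_mul_of_nonneg_left (hah _) (ha_nonneg g)) ?_ ?_
            · apply Summable.of_nonneg_of_le
                (fun g => mul_nonneg (ha_nonneg g) (ha_nonneg _))
                (fun g => mul_le_mul_of_nonneg_left (hah _) (ha_nonneg g))
                (ha_sum.mul_right h)
            · exact ha_sum.mul_right h
        _ = (∑' g, a g) * h := tsum_mul_right
        _ ≤ 1 * h := mul_le_mul_of_nonneg_right hS hh0
        _ = h := one_mul h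
    calc C * ∑ f ∈ F, ∑' p : Γ × Γ, (if p.2 = p.1 * f then a p.1 * a p.2 else 0)
        ≤ C * ∑ f ∈ F, h := by
          apply mul_le_mul_of_nonneg_left (Finset.sum_le_sum hterm_le) hC
      _ = C * h * F.card := by
          rw [Finset.sum_const, nsmul_eq_mul]
          ring
  calc ‖∑' p, f p‖ ≤ ∑' p, ‖f p‖ := norm_tsum_le_tsum_norm hnorm_sum
    _ ≤ ∑' p, (b₁ p + b₂ p) :=
        Summable.tsum_le_tsum hbound hnorm_sum (hb₁_sum.add hb₂_sum)
    _ = (∑' p, b₁ p) + ∑' p, b₂ p := Summable.tsum_add hb₁_sum hb₂_sum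
    _ ≤ C * h * F.card + ε := add_le_add htsum_b₁ htsum_b₂
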